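/- Let I be a finite nonempty mode set, c1, c2, c3 : I → ℝ nonnegative, p : I → ℝ nonnegative, and a1, a2 ≥ 0 constants. Let σ : [0,∞) → I be measurable with (1/t)·∫₀ᵗ 1{σ(τ)=i} dτ → p(i) as t → ∞ for every i ∈ I. Let f13, f23, f3 : [0,∞) → ℝ be measurable with 0 ≤ f13(τ) ≤ c1(σ(τ)), 0 ≤ f23(τ) ≤ c2(σ(τ)), and 0 ≤ f3(τ) ≤ c3(σ(τ)) for almost every τ. Suppose the queue lengths Q1(t) = Q1(0) + ∫₀ᵗ (a1 − f13), Q2(t) = Q2(0) + ∫₀ᵗ (a2 − f23), and Q3(t) = Q3(0) + ∫₀ᵗ (f13 + f23 − f3) satisfy Qj(t)/t → 0 as t → ∞ for j = 1, 2, 3. Then a1 ≤ Σ_{i∈I} p(i)·c1(i), a2 ≤ Σ_{i∈I} p(i)·c2(i), and a1 + a2 ≤ Σ_{i∈I} p(i)·c3(i). -/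

import Mathlib

open MeasureTheory Filter

lemma integ_aux (g : ℝ → ℝ) (hg : Measurable g) (M : ℝ)
    (hb : ∀ᵐ τ ∂(volume.restrict (Set.Ici (0:ℝ))), 0 ≤ g τ ∧ g τ ≤ M) (t : ℝ) :
    IntegrableOn g (Set.Ioc 0 t) := by
  have hsub : Set.Ioc (0:ℝ) t ⊆ Set.Ici 0 := fun x hx => le_of_lt hx.1
  have hb' : ∀ᵐ τ ∂(volume.restrict (Set.Ioc (0:ℝ) t)), 0 ≤ g τ ∧ g τ ≤ M :=
    ae_restrict_of_ae_restrict_of_subset hsub hb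
  refine Integrable.mono' ((integrableOn_const measure_Ioc_lt_top.ne :
      IntegrableOn (fun _ => M) (Set.Ioc 0 t) volume))
    hg.aestronglyMeasurable.restrict ?_
  filter_upwards [hb'] with τ hτ
  rw [Real.norm_eq_abs, abs_of_nonneg hτ.1]; exact hτ.2

lemma lim_of_queue (g : ℝ → ℝ) (hint : ∀ t, IntegrableOn g (Set.Ioc 0 t)) (a Q0 : ℝ)
    (hQ : Tendsto (fun t : ℝ => (Q0 + ∫ τ in Set.Ioc (0:ℝ) t, (a - g τ)) / t)
      atTop (nhds 0)) :
    Tendsto (fun t : ℝ => (1/t) * ∫ τ in Set.Ioc (0:ℝ) t, g τ) atTop (nhds a) := by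
  have h1 : (fun t : ℝ => a + Q0 / t - (Q0 + ∫ τ in Set.Ioc (0:ℝ) t, (a - g τ)) / t)
      =ᶠ[atTop] (fun t : ℝ => (1/t) * ∫ τ in Set.Ioc (0:ℝ) t, g τ) := by
    filter_upwards [eventually_gt_atTop (0:ℝ)] with t ht
    have hsplit : ∫ τ in Set.Ioc (0:ℝ) t, (a - g τ)
        = a * t - ∫ τ in Set.Ioc (0:ℝ) t, g τ := by
      rw [integral_sub ((integrableOn_const measure_Ioc_lt_top.ne :
        IntegrableOn (fun _ => a) (Set.Ioc 0 t) volume)) (hint t)]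
      rw [setIntegral_const, Measure.real, Real.volume_Ioc, smul_eq_mul]
      rw [ENNReal.toReal_ofReal (by linarith)]
      ring_nf
    rw [hsplit]
    field_simp
    ring
  have h2 : Tendsto (fun t : ℝ => a + Q0 / t - (Q0 + ∫ τ in Set.Ioc (0:ℝ) t, (a - g τ)) / t)
      atTop (nhds (a + 0 - 0)) :=
    (tendsto_const_nhds.add (tendsto_const_nhds.div_atTop tendsto_id)).sub hQ
  simpa using h2.congr' h1

lemma avg_le {I : Type*} [Fintype I] [DecidableEq I] [MeasurableSpace I]
    [MeasurableSingletonClass I]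
    (cap p : I → ℝ) (hcap : ∀ i, 0 ≤ cap i) (σ : ℝ → I) (hσ : Measurable σ)
    (hfrac : ∀ i, Tendsto
      (fun t : ℝ => (1/t) * ∫ τ in Set.Ioc (0:ℝ) t, (if σ τ = i then (1:ℝ) else 0))
      atTop (nhds (p i)))
    (g : ℝ → ℝ) (hint : ∀ t, IntegrableOn g (Set.Ioc 0 t))
    (hb : ∀ᵐ τ ∂(volume.restrict (Set.Ici (0:ℝ))), g τ ≤ cap (σ τ))
    (a : ℝ)
    (hlim : Tendsto (fun t : ℝ => (1/t) * ∫ τ in Set.Ioc (0:ℝ) t, g τ) atTop (nhds a)) :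
    a ≤ ∑ i, p i * cap i := by
  have hindm : ∀ i : I, Measurable (fun τ => if σ τ = i then (1:ℝ) else 0) := fun i =>
    Measurable.ite (hσ (measurableSet_singleton i)) measurable_const measurable_const
  have hindint : ∀ (i : I) (t : ℝ),
      IntegrableOn (fun τ => if σ τ = i then (1:ℝ) else 0) (Set.Ioc 0 t) := fun i t =>
    integ_aux _ (hindm i) 1 (ae_of_all _ (fun τ => by split <;> norm_num)) t
  have hkey : ∀ τ : ℝ, cap (σ τ) = ∑ i, (if σ τ = i then (1:ℝ) else 0) * cap i := by
    intro τ; simp [ite_mul]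
  have hcapm : Measurable (fun τ => cap (σ τ)) := ((measurable_of_countable cap).comp hσ)
  have hcapint : ∀ t, IntegrableOn (fun τ => cap (σ τ)) (Set.Ioc 0 t) := by
    intro t
    refine integ_aux _ hcapm (∑ i, cap i) (ae_of_all _ (fun τ => ⟨hcap _, ?_⟩)) t
    exact Finset.single_le_sum (fun i _ => hcap i) (Finset.mem_univ _)
  have hRHS : Tendsto (fun t : ℝ => (1/t) * ∫ τ in Set.Ioc (0:ℝ) t, cap (σ τ))
      atTop (nhds (∑ i, p i * cap i)) := by
    have heq : ∀ t : ℝ, (1/t) * ∫ τ in Set.Ioc (0:ℝ) t, cap (σ τ)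
        = ∑ i, ((1/t) * ∫ τ in Set.Ioc (0:ℝ) t, (if σ τ = i then (1:ℝ) else 0)) * cap i := by
      intro t
      rw [show (fun τ => cap (σ τ))
          = fun τ => ∑ i, (if σ τ = i then (1:ℝ) else 0) * cap i from funext hkey]
      rw [integral_finset_sum _ (fun i _ => (hindint i t).mul_const (cap i))]
      rw [Finset.mul_sum]
      congr 1; ext i
      rw [integral_mul_const]; ring
    simp_rw [heq]
    exact tendsto_finset_sum _ (fun i _ => (hfrac i).mul_const (cap i))
  refine le_of_tendsto_of_tendsto hlim hRHS ?_
  filter_upwards [eventually_gt_atTop (0:ℝ)] with t ht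
  have hb' : ∀ᵐ τ ∂(volume.restrict (Set.Ioc (0:ℝ) t)), g τ ≤ cap (σ τ) :=
    ae_restrict_of_ae_restrict_of_subset (fun x hx => le_of_lt hx.1) hb
  exact mul_le_mul_of_nonneg_left (integral_mono_ae (hint t) (hcapint t) hb')
    (by positivity)

/-- Pathwise core of the necessity direction of Theorem 3 (merge fluid queue):
if all three queue lengths grow sublinearly, the flows are nonnegative and
bounded by the mode-dependent capacities, and the switching signal spends
asymptotic time fraction `p i` in mode `i`, then `a1`, `a2`, and `a1 + a2` are
bounded by the corresponding time-averaged capacities. -/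
theorem merge_queue_necessity
    {I : Type*} [Fintype I] [Nonempty I] [DecidableEq I]
    [MeasurableSpace I] [MeasurableSingletonClass I]
    (c1 c2 c3 p : I → ℝ)
    (hc1 : ∀ i, 0 ≤ c1 i) (hc2 : ∀ i, 0 ≤ c2 i) (hc3 : ∀ i, 0 ≤ c3 i)
    (hp : ∀ i, 0 ≤ p i)
    (a1 a2 : ℝ) (ha1 : 0 ≤ a1) (ha2 : 0 ≤ a2)
    (σ : ℝ → I) (hσ : Measurable σ)
    (hfrac : ∀ i : I, Tendsto
      (fun t : ℝ => (1 / t) * ∫ τ in Set.Ioc (0 : ℝ) t, (if σ τ = i then (1 : ℝ) else 0))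
      atTop (nhds (p i)))
    (f13 f23 f3 : ℝ → ℝ)
    (hf13 : Measurable f13) (hf23 : Measurable f23) (hf3 : Measurable f3)
    (hbound : ∀ᵐ τ ∂(volume.restrict (Set.Ici (0 : ℝ))),
      (0 ≤ f13 τ ∧ f13 τ ≤ c1 (σ τ)) ∧ (0 ≤ f23 τ ∧ f23 τ ≤ c2 (σ τ)) ∧
        (0 ≤ f3 τ ∧ f3 τ ≤ c3 (σ τ)))
    (Q10 Q20 Q30 : ℝ)
    (hQ1 : Tendsto
      (fun t : ℝ => (Q10 + ∫ τ in Set.Ioc (0 : ℝ) t, (a1 - f13 τ)) / t)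
      atTop (nhds 0))
    (hQ2 : Tendsto
      (fun t : ℝ => (Q20 + ∫ τ in Set.Ioc (0 : ℝ) t, (a2 - f23 τ)) / t)
      atTop (nhds 0))
    (hQ3 : Tendsto
      (fun t : ℝ => (Q30 + ∫ τ in Set.Ioc (0 : ℝ) t, (f13 τ + f23 τ - f3 τ)) / t)
      atTop (nhds 0)) :
    a1 ≤ ∑ i : I, p i * c1 i ∧ a2 ≤ ∑ i : I, p i * c2 i ∧
      a1 + a2 ≤ ∑ i : I, p i * c3 i := by
  have hbig : ∀ (c : I → ℝ), (∀ i, 0 ≤ c i) → ∀ j, c j ≤ ∑ i, c i := fun c hc j =>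
    Finset.single_le_sum (fun i _ => hc i) (Finset.mem_univ _)
  have hint13 : ∀ t, IntegrableOn f13 (Set.Ioc 0 t) := by
    refine integ_aux f13 hf13 (∑ i, c1 i) ?_
    filter_upwards [hbound] with τ hτ
    exact ⟨hτ.1.1, hτ.1.2.trans (hbig c1 hc1 _)⟩
  have hint23 : ∀ t, IntegrableOn f23 (Set.Ioc 0 t) := by
    refine integ_aux f23 hf23 (∑ i, c2 i) ?_
    filter_upwards [hbound] with τ hτ
    exact ⟨hτ.2.1.1, hτ.2.1.2.trans (hbig c2 hc2 _)⟩
  have hint3 : ∀ t, IntegrableOn f3 (Set.Ioc 0 t) := by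
    refine integ_aux f3 hf3 (∑ i, c3 i) ?_
    filter_upwards [hbound] with τ hτ
    exact ⟨hτ.2.2.1, hτ.2.2.2.trans (hbig c3 hc3 _)⟩
  have lim13 := lim_of_queue f13 hint13 a1 Q10 hQ1
  have lim23 := lim_of_queue f23 hint23 a2 Q20 hQ2
  have lim3 : Tendsto (fun t : ℝ => (1/t) * ∫ τ in Set.Ioc (0:ℝ) t, f3 τ)
      atTop (nhds (a1 + a2)) := by
    have h1 : (fun t : ℝ => ((1/t) * ∫ τ in Set.Ioc (0:ℝ) t, f13 τ)
        + ((1/t) * ∫ τ in Set.Ioc (0:ℝ) t, f23 τ) + Q30 / t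
        - (Q30 + ∫ τ in Set.Ioc (0:ℝ) t, (f13 τ + f23 τ - f3 τ)) / t)
        =ᶠ[atTop] (fun t : ℝ => (1/t) * ∫ τ in Set.Ioc (0:ℝ) t, f3 τ) := by
      filter_upwards [eventually_gt_atTop (0:ℝ)] with t ht
      have hsplit : ∫ τ in Set.Ioc (0:ℝ) t, (f13 τ + f23 τ - f3 τ)
          = (∫ τ in Set.Ioc (0:ℝ) t, f13 τ) + (∫ τ in Set.Ioc (0:ℝ) t, f23 τ)
            - ∫ τ in Set.Ioc (0:ℝ) t, f3 τ := by
        have hA := integral_add (hint13 t) (hint23 t)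
        have hS := integral_sub ((hint13 t).add (hint23 t)) (hint3 t)
        simp only [Pi.add_apply] at hA hS
        rw [hS, hA]
      rw [hsplit]
      field_simp
      ring
    have h2 : Tendsto (fun t : ℝ => ((1/t) * ∫ τ in Set.Ioc (0:ℝ) t, f13 τ)
        + ((1/t) * ∫ τ in Set.Ioc (0:ℝ) t, f23 τ) + Q30 / t
        - (Q30 + ∫ τ in Set.Ioc (0:ℝ) t, (f13 τ + f23 τ - f3 τ)) / t)
        atTop (nhds (a1 + a2 + 0 - 0)) :=
      ((lim13.add lim23).add (tendsto_const_nhds.div_atTop tendsto_id)).sub hQ3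
    simpa using h2.congr' h1
  refine ⟨?_, ?_, ?_⟩
  · refine avg_le c1 p hc1 σ hσ hfrac f13 hint13 ?_ a1 lim13
    filter_upwards [hbound] with τ hτ using hτ.1.2
  · refine avg_le c2 p hc2 σ hσ hfrac f23 hint23 ?_ a2 lim23
    filter_upwards [hbound] with τ hτ using hτ.2.1.2
  · refine avg_le c3 p hc3 σ hσ hfrac f3 hint3 ?_ (a1 + a2) lim3
    filter_upwards [hbound] with τ hτ using hτ.2.2.2
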